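/- If I ⊂ S is a monomial ideal of Borel type and J ⊂ S is any monomial ideal, then the colon ideal (I : J) is an ideal of Borel type. -/

import Mathlib

/-! Monomials in `S = K[x_1,…,x_n]` are identified with their exponent vectors in
`Fin n →₀ ℕ` (0-indexed: the variable `x_j` of the paper is index `j-1`).
A monomial ideal is identified with its set `M` of exponent vectors of monomials. -/

/-- `M` is the set of exponent vectors of the monomials of a monomial ideal:
it is closed under multiplication by arbitrary monomials. -/
def MonIdeal {n : ℕ} (M : Set (Fin n →₀ ℕ)) : Prop :=
  ∀ u ∈ M, ∀ v : Fin n →₀ ℕ, u + v ∈ M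

/-- The Borel type condition: for every monomial `u ∈ I` and `j < i` with `x_i ∣ u`
there is `t > 0` with `x_j^t · u / x_i^{ν_i(u)} ∈ I`. -/
def BorelProp {n : ℕ} (M : Set (Fin n →₀ ℕ)) : Prop :=
  ∀ u ∈ M, ∀ i j : Fin n, j < i → u i ≠ 0 →
    ∃ t : ℕ, 0 < t ∧ Finsupp.single j t + Finsupp.update u i 0 ∈ M

/-- `i = m(u)`, the largest index of a variable dividing the monomial `u`. -/
def IsMaxVar {n : ℕ} (u : Fin n →₀ ℕ) (i : Fin n) : Prop :=
  u i ≠ 0 ∧ ∀ k : Fin n, i < k → u k = 0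

/-- `M` is stable: for every monomial `u ∈ M` and `j < m(u)`, `x_j · u / x_{m(u)} ∈ M`. -/
def StableProp {n : ℕ} (M : Set (Fin n →₀ ℕ)) : Prop :=
  ∀ u ∈ M, ∀ i : Fin n, IsMaxVar u i → ∀ j : Fin n, j < i →
    Finsupp.single j 1 + Finsupp.update u i (u i - 1) ∈ M

/-- degree of a monomial. -/
def mdeg {n : ℕ} (u : Fin n →₀ ℕ) : ℕ := ∑ k : Fin n, u k

/-- `u` is a minimal monomial generator of `M` (divisibility of monomials is `≤`
of exponent vectors). -/
def MinGen {n : ℕ} (M : Set (Fin n →₀ ℕ)) (u : Fin n →₀ ℕ) : Prop :=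
  u ∈ M ∧ ∀ v ∈ M, v ≤ u → v = u

/-- `deg(I)`: the maximal degree of a minimal monomial generator. -/
noncomputable def idealDeg {n : ℕ} (M : Set (Fin n →₀ ℕ)) : ℕ :=
  sSup {d | ∃ u, MinGen M u ∧ mdeg u = d}

/-- `I_{≥ e}`: the ideal generated by all monomials of `I` of degree `≥ e`. -/
def geSet {n : ℕ} (M : Set (Fin n →₀ ℕ)) (e : ℕ) : Set (Fin n →₀ ℕ) :=
  {w | ∃ u ∈ M, e ≤ mdeg u ∧ u ≤ w}

/-- the product of two monomial ideals (on the level of monomials). -/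
def prodSet {n : ℕ} (M N : Set (Fin n →₀ ℕ)) : Set (Fin n →₀ ℕ) :=
  {w | ∃ u ∈ M, ∃ v ∈ N, w = u + v}

/-- The Castelnuovo–Mumford regularity of a monomial ideal of Borel type: by
[Cimpoeas, Cor. 8] / Theorem 1.5, `reg(I) = min { e ≥ deg I : I_{≥e} is stable }`. -/
noncomputable def regSet {n : ℕ} (M : Set (Fin n →₀ ℕ)) : ℕ :=
  sInf {e | idealDeg M ≤ e ∧ StableProp (geSet M e)}

/-- `q` (0-indexed) is the largest index with `x_q ∈ √I`. -/
def IsQ {n : ℕ} (M : Set (Fin n →₀ ℕ)) (q : Fin n) : Prop :=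
  (∃ k : ℕ, 0 < k ∧ Finsupp.single q k ∈ M) ∧
    ∀ j : Fin n, (∃ k : ℕ, 0 < k ∧ Finsupp.single j k ∈ M) → j ≤ q

/-- the colon of a Borel type ideal by an arbitrary monomial ideal is
of Borel type. -/
theorem statement5 {n : ℕ} (M N : Set (Fin n →₀ ℕ))
    (hM : MonIdeal M) (hBM : BorelProp M) (hN : MonIdeal N) :
    BorelProp {u : Fin n →₀ ℕ | ∀ v ∈ N, u + v ∈ M} := by
  intro u hu i j hji hui
  set c := Finsupp.update u i 0 with hc
  -- monotonicity
  have hmono : ∀ t t' : ℕ, ∀ v v' : Fin n →₀ ℕ, t ≤ t' → v ≤ v' →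
      Finsupp.single j t + c + v ∈ M → Finsupp.single j t' + c + v' ∈ M := by
    intro t t' v v' ht hv h
    have := hM _ h (Finsupp.single j (t' - t) + (v' - v))
    have heq : Finsupp.single j t + c + v + (Finsupp.single j (t' - t) + (v' - v))
        = Finsupp.single j t' + c + v' := by
      ext k
      have hvk := Finsupp.le_def.mp hv k
      simp only [Finsupp.coe_add, Pi.add_apply, Finsupp.single_apply, Finsupp.tsub_apply]
      split_ifs <;> omega
    rwa [heq] at this
  -- per-v existence
  have hA : ∀ v : Fin n →₀ ℕ, ∃ t : ℕ, 0 < t ∧ (v ∈ N → Finsupp.single j t + c + v ∈ M) := by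
    intro v
    by_cases hvN : v ∈ N
    · have hw : u + v ∈ M := hu v hvN
      have hwi : (u + v) i ≠ 0 := by
        simp only [Finsupp.add_apply]
        omega
      obtain ⟨t, ht0, htM⟩ := hBM _ hw i j hji hwi
      refine ⟨t, ht0, fun _ => ?_⟩
      have := hM _ htM (Finsupp.single i (v i))
      have heq : Finsupp.single j t + Finsupp.update (u + v) i 0 + Finsupp.single i (v i)
          = Finsupp.single j t + c + v := by
        ext k
        by_cases hk : k = i
        · subst hk
          simp [Finsupp.update, hc, Finsupp.single_apply, Ne.symm (ne_of_lt hji)]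
        · simp only [Finsupp.coe_add, Pi.add_apply, Finsupp.coe_update, Function.update_of_ne hk,
            Finsupp.single_apply, hc]
          split_ifs <;> omega
      rwa [heq] at this
    · exact ⟨1, one_pos, fun h => absurd h hvN⟩
  choose T hT0 hT using hA
  by_contra hcon
  push_neg at hcon
  simp only [Set.mem_setOf_eq, not_forall] at hcon
  have hcon' : ∀ t : ℕ, ∃ v : Fin n →₀ ℕ, 0 < t →
      v ∈ N ∧ Finsupp.single j t + c + v ∉ M := by
    intro t
    by_cases ht : 0 < t
    · obtain ⟨v, hvN, hv⟩ := hcon t ht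
      exact ⟨v, fun _ => ⟨hvN, hv⟩⟩
    · exact ⟨0, fun h => absurd h ht⟩
  choose V hV using hcon'
  -- the sequence of levels
  set s : ℕ → ℕ := fun k => Nat.rec 1 (fun _ sk => max (sk + 1) (T (V sk))) k with hs
  have hs0 : ∀ k, 0 < s k := by
    intro k
    induction k with
    | zero => exact one_pos
    | succ k ih => exact lt_of_lt_of_le (Nat.lt_succ_of_lt ih) (le_max_left _ _)
  have hssucc : ∀ k, s k < s (k + 1) := fun k => lt_of_lt_of_le (Nat.lt_succ_self _) (le_max_left _ _)
  have hsmono : StrictMono s := strictMono_nat_of_lt_succ hssucc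
  have hTs : ∀ k, T (V (s k)) ≤ s (k + 1) := fun k => le_max_right _ _
  obtain ⟨k, l, hkl, hle⟩ := (Set.isPWO_of_wellQuasiOrderedLE Set.univ) (fun k => ⟨V (s k), Set.mem_univ _⟩)
  have h1 : Finsupp.single j (T (V (s k))) + c + V (s k) ∈ M :=
    hT (V (s k)) ((hV (s k) (hs0 k)).1)
  have h2 : Finsupp.single j (s l) + c + V (s l) ∈ M := by
    refine hmono _ _ _ _ ?_ hle h1
    calc T (V (s k)) ≤ s (k + 1) := hTs k
      _ ≤ s l := hsmono.le_iff_le.mpr hkl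
  exact (hV (s l) (hs0 l)).2 h2
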